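/- Let u_1 ≥ u_2 ≥ ... ≥ u_{2N} ≥ 0. Among all perfect matchings m of the set {1,...,2N} (partitions into N unordered pairs), the matching {(1,2),(3,4),...,(2N-1,2N)} maximizes ∑_{(i,j)∈m} u_i u_j. -/

import Mathlib

open Finset

namespace Stmt1Aux

/-- count of `i` with `i ≤ s` and `f i ≤ t` -/
def cnt {n : ℕ} (f : Fin n → Fin n) (s t : ℕ) : ℕ :=
  (univ.filter (fun i : Fin n => (i : ℕ) ≤ s ∧ ((f i : ℕ)) ≤ t)).card

lemma cnt_symm {n : ℕ} (f : Fin n → Fin n) (hinv : ∀ i, f (f i) = i) (s t : ℕ) :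
    cnt f s t = cnt f t s := by
  unfold cnt
  apply Finset.card_bij' (fun i _ => f i) (fun i _ => f i)
  · intro a ha
    simp only [mem_filter, mem_univ, true_and] at ha ⊢
    exact ⟨ha.2, by rw [hinv]; exact ha.1⟩
  · intro a ha
    simp only [mem_filter, mem_univ, true_and] at ha ⊢
    exact ⟨ha.2, by rw [hinv]; exact ha.1⟩
  · intro a _; exact hinv a
  · intro a _; exact hinv a

lemma even_cnt_diag {n : ℕ} (f : Fin n → Fin n) (hinv : ∀ i, f (f i) = i)
    (hne : ∀ i, f i ≠ i) (s : ℕ) : Even (cnt f s s) := by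
  set S := univ.filter (fun i : Fin n => (i : ℕ) ≤ s ∧ ((f i : ℕ)) ≤ s) with hS
  have key : ∑ _x ∈ S, (1 : ZMod 2) = 0 := by
    apply Finset.sum_involution (fun a _ => f a)
    · intro a ha; decide
    · intro a ha h; exact hne a
    · intro a ha
      simp only [hS, mem_filter, mem_univ, true_and] at ha ⊢
      exact ⟨ha.2, by rw [hinv]; exact ha.1⟩
    · intro a _; exact hinv a
  rw [Finset.sum_const, nsmul_eq_mul, mul_one] at key
  have : (2 : ℕ) ∣ S.card := (ZMod.natCast_eq_zero_iff _ _).mp key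
  exact Nat.even_iff.mpr (Nat.mod_eq_zero_of_dvd this)

lemma card_filter_le {n s : ℕ} (h : s < n) :
    (univ.filter fun i : Fin n => (i : ℕ) ≤ s).card = s + 1 := by
  have : (univ.filter fun i : Fin n => (i : ℕ) ≤ s) = Finset.Iic (⟨s, h⟩ : Fin n) := by
    ext i; simp [Fin.le_def]
  rw [this, Fin.card_Iic]

lemma card_filter_lt {n s : ℕ} (h : s < n) :
    (univ.filter fun i : Fin n => (i : ℕ) < s).card = s := by
  have : (univ.filter fun i : Fin n => (i : ℕ) < s) = Finset.Iio (⟨s, h⟩ : Fin n) := by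
    ext i; simp [Fin.lt_def]
  rw [this, Fin.card_Iio]

lemma cnt_le_of_lt {n : ℕ} (f : Fin n → Fin n) {s : ℕ} (t : ℕ) (hs : s < n) :
    cnt f s t ≤ s + 1 := by
  rw [← card_filter_le hs]
  apply Finset.card_le_card
  intro i hi
  simp only [mem_filter, mem_univ, true_and] at hi ⊢
  exact hi.1

def gm (N : ℕ) : Fin (2 * N) → Fin (2 * N) := fun i =>
  ⟨if i.val % 2 = 0 then i.val + 1 else i.val - 1, by
    have h := i.isLt; split <;> omega⟩

lemma gm_val (N : ℕ) (i : Fin (2 * N)) :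
    (gm N i : ℕ) = if i.val % 2 = 0 then i.val + 1 else i.val - 1 := rfl

lemma gm_inv (N : ℕ) : ∀ i, gm N (gm N i) = i := by
  intro i
  apply Fin.ext
  rw [gm_val, gm_val]
  have h := i.isLt
  rcases Nat.even_or_odd i.val with he | ho
  · have h2 : i.val % 2 = 0 := Nat.even_iff.mp he
    simp only [h2, if_true]
    have : (i.val + 1) % 2 = 1 := by omega
    simp [this]
  · have h2 : i.val % 2 = 1 := Nat.odd_iff.mp ho
    have h3 : ¬ (i.val % 2 = 0) := by omega
    rw [if_neg h3]
    have : (i.val - 1) % 2 = 0 := by omega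
    rw [if_pos this]
    omega

lemma gm_ne (N : ℕ) : ∀ i, gm N i ≠ i := by
  intro i h
  have := congrArg Fin.val h
  rw [gm_val] at this
  have h2 := i.isLt
  split at this <;> omega

lemma cnt_gm_lt {N s t : ℕ} (hs : s < 2 * N) (hst : s < t) :
    cnt (gm N) s t = s + 1 := by
  have hset : (univ.filter fun i : Fin (2 * N) => (i : ℕ) ≤ s ∧ ((gm N i : ℕ)) ≤ t)
      = univ.filter fun i : Fin (2 * N) => (i : ℕ) ≤ s := by
    ext i
    simp only [mem_filter, mem_univ, true_and]
    rw [gm_val]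
    constructor
    · exact fun h => h.1
    · intro h
      refine ⟨h, ?_⟩
      split <;> omega
  unfold cnt
  rw [hset, card_filter_le hs]

lemma cnt_gm_diag_even {N s : ℕ} (hs : s < 2 * N) (he : s % 2 = 0) :
    cnt (gm N) s s = s := by
  have hset : (univ.filter fun i : Fin (2 * N) => (i : ℕ) ≤ s ∧ ((gm N i : ℕ)) ≤ s)
      = univ.filter fun i : Fin (2 * N) => (i : ℕ) < s := by
    ext i
    simp only [mem_filter, mem_univ, true_and]
    rw [gm_val]
    constructor
    · rintro ⟨h1, h2⟩
      split at h2 <;> omega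
    · intro h
      refine ⟨by omega, ?_⟩
      split <;> omega
  unfold cnt
  rw [hset, card_filter_lt hs]

lemma cnt_gm_diag_odd {N s : ℕ} (hs : s < 2 * N) (ho : s % 2 = 1) :
    cnt (gm N) s s = s + 1 := by
  have hset : (univ.filter fun i : Fin (2 * N) => (i : ℕ) ≤ s ∧ ((gm N i : ℕ)) ≤ s)
      = univ.filter fun i : Fin (2 * N) => (i : ℕ) ≤ s := by
    ext i
    simp only [mem_filter, mem_univ, true_and]
    rw [gm_val]
    constructor
    · exact fun h => h.1
    · intro h
      refine ⟨h, ?_⟩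
      split <;> omega
  unfold cnt
  rw [hset, card_filter_le hs]

lemma cnt_le_aux {N : ℕ} (f : Fin (2 * N) → Fin (2 * N)) (hinv : ∀ i, f (f i) = i)
    (hne : ∀ i, f i ≠ i) {s t : ℕ} (hs : s < 2 * N) (ht : t < 2 * N) (hst : s ≤ t) :
    cnt f s t ≤ cnt (gm N) s t := by
  rcases lt_or_eq_of_le hst with h | rfl
  · rw [cnt_gm_lt hs h]
    exact cnt_le_of_lt f t hs
  · rcases Nat.even_or_odd s with he | ho
    · rw [cnt_gm_diag_even hs (Nat.even_iff.mp he)]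
      have h1 := cnt_le_of_lt f s hs
      have h2 := even_cnt_diag f hinv hne s
      have h3 : cnt f s s % 2 = 0 := Nat.even_iff.mp h2
      have h4 : s % 2 = 0 := Nat.even_iff.mp he
      omega
    · rw [cnt_gm_diag_odd hs (Nat.odd_iff.mp ho)]
      exact cnt_le_of_lt f s hs

lemma cnt_le {N : ℕ} (f : Fin (2 * N) → Fin (2 * N)) (hinv : ∀ i, f (f i) = i)
    (hne : ∀ i, f i ≠ i) {s t : ℕ} (hs : s < 2 * N) (ht : t < 2 * N) :
    cnt f s t ≤ cnt (gm N) s t := by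
  rcases le_total s t with h | h
  · exact cnt_le_aux f hinv hne hs ht h
  · rw [cnt_symm f hinv, cnt_symm (gm N) (gm_inv N)]
    exact cnt_le_aux f hinv hne ht hs h

lemma sum_range_two_mul (F : ℕ → ℝ) (M : ℕ) :
    ∑ j ∈ range (2 * M), F j = ∑ k ∈ range M, (F (2 * k) + F (2 * k + 1)) := by
  induction M with
  | zero => simp
  | succ m ih =>
    rw [Finset.sum_range_succ, ← ih, show 2 * (m + 1) = (2 * m + 1) + 1 by ring,
      Finset.sum_range_succ, Finset.sum_range_succ]
    ring

end Stmt1Aux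

open Stmt1Aux in
/-- Monopartite rank-1 matching: for decreasing nonnegative `u`, among all perfect
matchings (fixed-point-free involutions) of `{0,...,2N-1}`, the matching pairing
`2k` with `2k+1` maximizes the total weight `∑ u_i u_{m(i)}` (each pair counted twice). -/
theorem stmt_1 (N : ℕ) (hN : 0 < N) (u : Fin (2 * N) → ℝ)
    (hmono : Antitone u) (hnn : ∀ i, 0 ≤ u i)
    (f : Fin (2 * N) → Fin (2 * N)) (hinv : ∀ i, f (f i) = i) (hne : ∀ i, f i ≠ i) :
    ∑ i, u i * u (f i) ≤
      ∑ k : Fin N, 2 * (u ⟨2 * k.val, by omega⟩ * u ⟨2 * k.val + 1, by omega⟩) := by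
  let v : ℕ → ℝ := fun k => if h : k < 2 * N then u ⟨k, h⟩ else 0
  have hv_of_lt : ∀ (k : ℕ) (h : k < 2 * N), v k = u ⟨k, h⟩ := fun k h => dif_pos h
  have hv_fin : ∀ i : Fin (2 * N), v i.val = u i := by
    intro i; rw [hv_of_lt i.val i.isLt]
  have hv_n : v (2 * N) = 0 := dif_neg (lt_irrefl (2 * N))
  let D : ℕ → ℝ := fun k => v k - v (k + 1)
  have hD_nn : ∀ k, 0 ≤ D k := by
    intro k
    show 0 ≤ v k - v (k + 1)
    rw [sub_nonneg]
    show (if h : k + 1 < 2 * N then u ⟨k + 1, h⟩ else 0)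
        ≤ (if h : k < 2 * N then u ⟨k, h⟩ else 0)
    split
    · rw [dif_pos (by omega : k < 2 * N)]
      exact hmono (by rw [Fin.mk_le_mk]; omega)
    · split
      · exact hnn _
      · exact le_refl 0
  -- telescoping
  have htel : ∀ m, ∑ s ∈ range m, D s = v 0 - v m := by
    intro m
    induction m with
    | zero => simp
    | succ p ih =>
      rw [Finset.sum_range_succ, ih]
      show v 0 - v p + (v p - v (p + 1)) = v 0 - v (p + 1)
      ring
  have hdecomp : ∀ i : Fin (2 * N), u i = ∑ s ∈ range (2 * N), if (i : ℕ) ≤ s then D s else 0 := by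
    intro i
    rw [← Finset.sum_filter]
    have hfil : (range (2 * N)).filter (fun s => (i : ℕ) ≤ s) = Finset.Ico (i : ℕ) (2 * N) := by
      ext x
      simp only [mem_filter, mem_range, Finset.mem_Ico]
      tauto
    rw [hfil, Finset.sum_Ico_eq_sub _ (le_of_lt i.isLt), htel, htel, hv_n, ← hv_fin i]
    ring
  have key : ∀ g : Fin (2 * N) → Fin (2 * N), ∑ i, u i * u (g i)
      = ∑ s ∈ range (2 * N), ∑ t ∈ range (2 * N), (cnt g s t : ℝ) * (D s * D t) := by
    intro g
    have e1 : ∀ i : Fin (2 * N), u i * u (g i)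
        = ∑ s ∈ range (2 * N), ∑ t ∈ range (2 * N),
            (if (i : ℕ) ≤ s ∧ ((g i : ℕ)) ≤ t then D s * D t else 0) := by
      intro i
      rw [hdecomp i, hdecomp (g i), Finset.sum_mul_sum]
      refine Finset.sum_congr rfl fun s _ => Finset.sum_congr rfl fun t _ => ?_
      by_cases h1 : (i : ℕ) ≤ s <;> by_cases h2 : ((g i : ℕ)) ≤ t <;> simp [h1, h2]
    calc ∑ i, u i * u (g i)
        = ∑ i : Fin (2 * N), ∑ s ∈ range (2 * N), ∑ t ∈ range (2 * N),
            (if (i : ℕ) ≤ s ∧ ((g i : ℕ)) ≤ t then D s * D t else 0) :=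
          Finset.sum_congr rfl fun i _ => e1 i
      _ = ∑ s ∈ range (2 * N), ∑ t ∈ range (2 * N), ∑ i : Fin (2 * N),
            (if (i : ℕ) ≤ s ∧ ((g i : ℕ)) ≤ t then D s * D t else 0) := by
          rw [Finset.sum_comm]
          exact Finset.sum_congr rfl fun s _ => Finset.sum_comm
      _ = ∑ s ∈ range (2 * N), ∑ t ∈ range (2 * N), (cnt g s t : ℝ) * (D s * D t) := by
          refine Finset.sum_congr rfl fun s _ => Finset.sum_congr rfl fun t _ => ?_
          rw [← Finset.sum_filter, Finset.sum_const, nsmul_eq_mul]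
          rfl
  have main : ∑ i, u i * u (f i) ≤ ∑ i, u i * u (gm N i) := by
    rw [key f, key (gm N)]
    refine Finset.sum_le_sum fun s hs => Finset.sum_le_sum fun t ht => ?_
    have hs' : s < 2 * N := mem_range.mp hs
    have ht' : t < 2 * N := mem_range.mp ht
    apply mul_le_mul_of_nonneg_right
    · exact_mod_cast cnt_le f hinv hne hs' ht'
    · exact mul_nonneg (hD_nn s) (hD_nn t)
  refine main.trans (le_of_eq ?_)
  -- compute the canonical-matching sum
  have step1 : ∑ i, u i * u (gm N i)
      = ∑ j ∈ range (2 * N), (fun j => v j * v (if j % 2 = 0 then j + 1 else j - 1)) j := by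
    rw [← Fin.sum_univ_eq_sum_range]
    refine Finset.sum_congr rfl fun i _ => ?_
    rw [hv_fin i]
    congr 1
    rw [← gm_val N i, hv_fin (gm N i)]
  rw [step1, sum_range_two_mul]
  rw [← Fin.sum_univ_eq_sum_range (fun k =>
      ((fun j => v j * v (if j % 2 = 0 then j + 1 else j - 1)) (2 * k)
        + (fun j => v j * v (if j % 2 = 0 then j + 1 else j - 1)) (2 * k + 1))) N]
  refine Finset.sum_congr rfl fun k _ => ?_
  dsimp only
  have h1 : (2 * (k : ℕ)) % 2 = 0 := by omega
  rw [if_pos h1, if_neg (by omega : ¬ (2 * (k : ℕ) + 1) % 2 = 0)]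
  have e2 : 2 * (k : ℕ) + 1 - 1 = 2 * (k : ℕ) := by omega
  rw [e2]
  have hk1 : 2 * (k : ℕ) < 2 * N := by omega
  have hk2 : 2 * (k : ℕ) + 1 < 2 * N := by omega
  rw [hv_of_lt _ hk1, hv_of_lt _ hk2]
  ring
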